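/- Let l > 0 and let u : ℝ → ℂ be twice continuously differentiable on [0, l] with u(0) = 0 and u(l) = 0. Then ∫₀ˡ |u′(x)|² dx ≤ (l²/2) · ∫₀ˡ |u″(x)|² dx. -/

import Mathlib

open MeasureTheory Set intervalIntegral

lemma cs_interval (a b : ℝ) (hab : a ≤ b) (f : ℝ → ℝ)
    (hf : ContinuousOn f (Set.Icc a b)) :
    (∫ x in a..b, f x) ^ 2 ≤ (b - a) * ∫ x in a..b, f x ^ 2 := by
  rcases eq_or_lt_of_le hab with rfl | hlt
  · simp
  have hf' : ContinuousOn f (Set.uIcc a b) := by rwa [Set.uIcc_of_le hab]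
  have hfint : IntervalIntegrable f volume a b := hf'.intervalIntegrable
  have hf2int : IntervalIntegrable (fun x => f x ^ 2) volume a b :=
    (hf'.pow 2).intervalIntegrable
  set I := ∫ x in a..b, f x with hI
  set m := b - a with hm
  have hm0 : 0 < m := sub_pos.2 hlt
  have hJ : (0:ℝ) ≤ ∫ x in a..b, (m * f x - I) ^ 2 :=
    intervalIntegral.integral_nonneg hab (fun x _ => sq_nonneg _)
  have hexp : (∫ x in a..b, (m * f x - I) ^ 2)
      = m ^ 2 * (∫ x in a..b, f x ^ 2) - 2 * m * I * I + I ^ 2 * m := by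
    have h1 : ∀ x, (m * f x - I) ^ 2 = m ^ 2 * f x ^ 2 - 2 * m * I * f x + I ^ 2 := by
      intro x; ring
    simp only [h1]
    rw [intervalIntegral.integral_add ((hf2int.const_mul _).sub (hfint.const_mul _))
        intervalIntegrable_const,
      intervalIntegral.integral_sub (hf2int.const_mul _) (hfint.const_mul _),
      intervalIntegral.integral_const_mul, intervalIntegral.integral_const_mul,
      intervalIntegral.integral_const, smul_eq_mul]
    ring
  rw [hexp] at hJ
  nlinarith [hJ, hm0]

lemma key_comp (l : ℝ) (hl : 0 < l) (g g' : ℝ → ℝ)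
    (hgc : ContinuousOn g (Set.Icc 0 l)) (hg'c : ContinuousOn g' (Set.Icc 0 l))
    (hderiv : ∀ x ∈ Set.Ioo 0 l, HasDerivAt g (g' x) x)
    (ζ : ℝ) (hζ : ζ ∈ Set.Icc 0 l) (hgζ : g ζ = 0) :
    ∫ x in (0:ℝ)..l, g x ^ 2 ≤ l ^ 2 / 2 * ∫ x in (0:ℝ)..l, g' x ^ 2 := by
  have huIcc : Set.uIcc (0:ℝ) l = Set.Icc 0 l := Set.uIcc_of_le hl.le
  have hsub : ∀ a b : ℝ, a ∈ Set.Icc 0 l → b ∈ Set.Icc 0 l →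
      Set.uIcc a b ⊆ Set.Icc 0 l := by
    intro a b ha hb
    rw [← huIcc]
    exact Set.uIcc_subset_uIcc (by rwa [huIcc]) (by rwa [huIcc])
  set A := ∫ x in (0:ℝ)..l, g' x ^ 2 with hA
  have hg'2int : IntervalIntegrable (fun x => g' x ^ 2) volume 0 l :=
    ((hg'c.pow 2).mono (by rw [huIcc])).intervalIntegrable
  have hA0 : 0 ≤ A := intervalIntegral.integral_nonneg hl.le (fun x _ => sq_nonneg _)
  -- pointwise bound
  have hpt : ∀ x ∈ Set.Icc 0 l, g x ^ 2 ≤ |x - ζ| * A := by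
    intro x hx
    have hint : IntervalIntegrable g' volume ζ x :=
      (hg'c.mono (hsub ζ x hζ hx)).intervalIntegrable
    have hftc : ∫ t in ζ..x, g' t = g x - g ζ := by
      apply intervalIntegral.integral_eq_sub_of_hasDeriv_right
        (hgc.mono (hsub ζ x hζ hx))
      · intro t ht
        have ht' : t ∈ Set.Ioo 0 l := by
          constructor
          · exact lt_of_le_of_lt (le_min hζ.1 hx.1) ht.1
          · exact lt_of_lt_of_le ht.2 (max_le hζ.2 hx.2)
        exact (hderiv t ht').hasDerivWithinAt
      · exact hint
    have hgx : g x = ∫ t in ζ..x, g' t := by rw [hftc, hgζ, sub_zero]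
    rcases le_total ζ x with hcase | hcase
    · have h1 : (∫ t in ζ..x, g' t) ^ 2 ≤ (x - ζ) * ∫ t in ζ..x, g' t ^ 2 :=
        cs_interval ζ x hcase g' (hg'c.mono (Set.Icc_subset_Icc hζ.1 hx.2))
      have h2 : (∫ t in ζ..x, g' t ^ 2) ≤ A :=
        intervalIntegral.integral_mono_interval hζ.1 hcase hx.2
          (Filter.Eventually.of_forall fun t => sq_nonneg _) hg'2int
      have habs : |x - ζ| = x - ζ := abs_of_nonneg (by linarith)
      calc g x ^ 2 = (∫ t in ζ..x, g' t) ^ 2 := by rw [hgx]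
        _ ≤ (x - ζ) * ∫ t in ζ..x, g' t ^ 2 := h1
        _ ≤ |x - ζ| * A := by
            rw [habs]
            exact mul_le_mul_of_nonneg_left h2 (by linarith)
    · have h1 : (∫ t in x..ζ, g' t) ^ 2 ≤ (ζ - x) * ∫ t in x..ζ, g' t ^ 2 :=
        cs_interval x ζ hcase g' (hg'c.mono (Set.Icc_subset_Icc hx.1 hζ.2))
      have h2 : (∫ t in x..ζ, g' t ^ 2) ≤ A :=
        intervalIntegral.integral_mono_interval hx.1 hcase hζ.2
          (Filter.Eventually.of_forall fun t => sq_nonneg _) hg'2int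
      have habs : |x - ζ| = ζ - x := by rw [abs_sub_comm]; exact abs_of_nonneg (by linarith)
      calc g x ^ 2 = (∫ t in x..ζ, g' t) ^ 2 := by
            rw [hgx, intervalIntegral.integral_symm]; ring
        _ ≤ (ζ - x) * ∫ t in x..ζ, g' t ^ 2 := h1
        _ ≤ |x - ζ| * A := by
            rw [habs]
            exact mul_le_mul_of_nonneg_left h2 (by linarith)
  -- integrate the pointwise bound
  have hg2int : IntervalIntegrable (fun x => g x ^ 2) volume 0 l :=
    ((hgc.pow 2).mono (by rw [huIcc])).intervalIntegrable
  have habscont : Continuous (fun x : ℝ => |x - ζ|) :=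
    (continuous_id.sub continuous_const).abs
  have hrint : IntervalIntegrable (fun x => |x - ζ| * A) volume 0 l :=
    (habscont.mul continuous_const).intervalIntegrable 0 l
  have step1 : ∫ x in (0:ℝ)..l, g x ^ 2 ≤ ∫ x in (0:ℝ)..l, |x - ζ| * A :=
    intervalIntegral.integral_mono_on hl.le hg2int hrint hpt
  have habsint : (∫ x in (0:ℝ)..l, |x - ζ|) = ζ ^ 2 / 2 + (l - ζ) ^ 2 / 2 := by
    have hsplit : (∫ x in (0:ℝ)..ζ, |x - ζ|) + (∫ x in ζ..l, |x - ζ|)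
        = ∫ x in (0:ℝ)..l, |x - ζ| := by
      apply intervalIntegral.integral_add_adjacent_intervals
      · exact habscont.intervalIntegrable 0 ζ
      · exact habscont.intervalIntegrable ζ l
    have h1 : (∫ x in (0:ℝ)..ζ, |x - ζ|) = ζ ^ 2 / 2 := by
      rw [intervalIntegral.integral_congr (g := fun x => ζ - x) ?_]
      · rw [intervalIntegral.integral_sub intervalIntegrable_const intervalIntegrable_id,
          intervalIntegral.integral_const, integral_id]
        simp only [smul_eq_mul]; ring
      · intro x hx
        rw [Set.uIcc_of_le hζ.1] at hx
        show |x - ζ| = ζ - x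
        rw [abs_sub_comm]
        exact abs_of_nonneg (by linarith [hx.2])
    have h2 : (∫ x in ζ..l, |x - ζ|) = (l - ζ) ^ 2 / 2 := by
      rw [intervalIntegral.integral_congr (g := fun x => x - ζ) ?_]
      · rw [intervalIntegral.integral_sub intervalIntegrable_id intervalIntegrable_const,
          intervalIntegral.integral_const, integral_id]
        simp only [smul_eq_mul]; ring
      · intro x hx
        rw [Set.uIcc_of_le hζ.2] at hx
        show |x - ζ| = x - ζ
        exact abs_of_nonneg (by linarith [hx.1])
    rw [← hsplit, h1, h2]
  have step2 : (∫ x in (0:ℝ)..l, |x - ζ| * A) = (ζ ^ 2 / 2 + (l - ζ) ^ 2 / 2) * A := by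
    rw [intervalIntegral.integral_mul_const, habsint]
  have hfin : (ζ ^ 2 / 2 + (l - ζ) ^ 2 / 2) * A ≤ l ^ 2 / 2 * A := by
    apply mul_le_mul_of_nonneg_right _ hA0
    nlinarith [hζ.1, hζ.2]
  calc ∫ x in (0:ℝ)..l, g x ^ 2 ≤ ∫ x in (0:ℝ)..l, |x - ζ| * A := step1
    _ = (ζ ^ 2 / 2 + (l - ζ) ^ 2 / 2) * A := step2
    _ ≤ l ^ 2 / 2 * A := hfin


theorem poincare_second_order (l : ℝ) (hl : 0 < l) (u : ℝ → ℂ)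
    (hu : ContDiffOn ℝ 2 u (Set.Icc 0 l))
    (h0 : u 0 = 0) (hl0 : u l = 0) :
    ∫ x in (0:ℝ)..l, ‖derivWithin u (Set.Icc 0 l) x‖ ^ 2
      ≤ l ^ 2 / 2 * ∫ x in (0:ℝ)..l, ‖iteratedDerivWithin 2 u (Set.Icc 0 l) x‖ ^ 2 := by
  have hud : UniqueDiffOn ℝ (Set.Icc (0:ℝ) l) := uniqueDiffOn_Icc hl
  have huIcc : Set.uIcc (0:ℝ) l = Set.Icc 0 l := Set.uIcc_of_le hl.le
  set v := derivWithin u (Set.Icc 0 l) with hv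
  set w := derivWithin v (Set.Icc 0 l) with hw
  have hv1 : ContDiffOn ℝ 1 v (Set.Icc 0 l) := hu.derivWithin hud (by norm_num)
  have hvc : ContinuousOn v (Set.Icc 0 l) := hv1.continuousOn
  have hwc : ContinuousOn w (Set.Icc 0 l) :=
    hv1.continuousOn_derivWithin hud (le_refl 1)
  have hiter : ∀ x ∈ Set.Icc (0:ℝ) l, iteratedDerivWithin 2 u (Set.Icc 0 l) x = w x := by
    intro x hx
    rw [show (2:ℕ) = 1 + 1 from rfl, iteratedDerivWithin_succ',
      iteratedDerivWithin_one]
  have hderu : ∀ x ∈ Set.Ioo (0:ℝ) l, HasDerivAt u (v x) x := by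
    intro x hx
    have := (hu.differentiableOn (by norm_num) x (Set.Ioo_subset_Icc_self hx)).hasDerivWithinAt
    exact this.hasDerivAt (Icc_mem_nhds hx.1 hx.2)
  have hderv : ∀ x ∈ Set.Ioo (0:ℝ) l, HasDerivAt v (w x) x := by
    intro x hx
    have := (hv1.differentiableOn (by norm_num) x (Set.Ioo_subset_Icc_self hx)).hasDerivWithinAt
    exact this.hasDerivAt (Icc_mem_nhds hx.1 hx.2)
  -- Rolle for the real part
  obtain ⟨ζr, hζr, hζr0⟩ : ∃ c ∈ Set.Ioo (0:ℝ) l, (v c).re = 0 := by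
    apply exists_hasDerivAt_eq_zero hl
      (Complex.continuous_re.comp_continuousOn hu.continuousOn)
      (by simp [Function.comp, h0, hl0])
    intro x hx
    exact (Complex.reCLM.hasFDerivAt).comp_hasDerivAt x (hderu x hx)
  obtain ⟨ζi, hζi, hζi0⟩ : ∃ c ∈ Set.Ioo (0:ℝ) l, (v c).im = 0 := by
    apply exists_hasDerivAt_eq_zero hl
      (Complex.continuous_im.comp_continuousOn hu.continuousOn)
      (by simp [Function.comp, h0, hl0])
    intro x hx
    exact (Complex.imCLM.hasFDerivAt).comp_hasDerivAt x (hderu x hx)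
  -- apply the component lemma
  have hre := key_comp l hl (fun x => (v x).re) (fun x => (w x).re)
    (Complex.continuous_re.comp_continuousOn hvc)
    (Complex.continuous_re.comp_continuousOn hwc)
    (fun x hx => (Complex.reCLM.hasFDerivAt).comp_hasDerivAt x (hderv x hx))
    ζr (Set.Ioo_subset_Icc_self hζr) hζr0
  have him := key_comp l hl (fun x => (v x).im) (fun x => (w x).im)
    (Complex.continuous_im.comp_continuousOn hvc)
    (Complex.continuous_im.comp_continuousOn hwc)
    (fun x hx => (Complex.imCLM.hasFDerivAt).comp_hasDerivAt x (hderv x hx))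
    ζi (Set.Ioo_subset_Icc_self hζi) hζi0
  have hvre2 : IntervalIntegrable (fun x => (v x).re ^ 2) volume 0 l :=
    (((Complex.continuous_re.comp_continuousOn hvc).pow 2).mono (by rw [huIcc])).intervalIntegrable
  have hvim2 : IntervalIntegrable (fun x => (v x).im ^ 2) volume 0 l :=
    (((Complex.continuous_im.comp_continuousOn hvc).pow 2).mono (by rw [huIcc])).intervalIntegrable
  have hwre2 : IntervalIntegrable (fun x => (w x).re ^ 2) volume 0 l :=
    (((Complex.continuous_re.comp_continuousOn hwc).pow 2).mono (by rw [huIcc])).intervalIntegrable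
  have hwim2 : IntervalIntegrable (fun x => (w x).im ^ 2) volume 0 l :=
    (((Complex.continuous_im.comp_continuousOn hwc).pow 2).mono (by rw [huIcc])).intervalIntegrable
  have hnorm : ∀ z : ℂ, ‖z‖ ^ 2 = z.re ^ 2 + z.im ^ 2 := by
    intro z
    rw [Complex.sq_norm, Complex.normSq_apply]; ring
  calc ∫ x in (0:ℝ)..l, ‖v x‖ ^ 2
      = (∫ x in (0:ℝ)..l, (v x).re ^ 2) + ∫ x in (0:ℝ)..l, (v x).im ^ 2 := by
        simp only [hnorm]
        exact intervalIntegral.integral_add hvre2 hvim2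
    _ ≤ l ^ 2 / 2 * (∫ x in (0:ℝ)..l, (w x).re ^ 2)
        + l ^ 2 / 2 * ∫ x in (0:ℝ)..l, (w x).im ^ 2 := add_le_add hre him
    _ = l ^ 2 / 2 * ((∫ x in (0:ℝ)..l, (w x).re ^ 2) + ∫ x in (0:ℝ)..l, (w x).im ^ 2) := by
        ring
    _ = l ^ 2 / 2 * ∫ x in (0:ℝ)..l, ((w x).re ^ 2 + (w x).im ^ 2) := by
        rw [intervalIntegral.integral_add hwre2 hwim2]
    _ = l ^ 2 / 2 * ∫ x in (0:ℝ)..l, ‖iteratedDerivWithin 2 u (Set.Icc 0 l) x‖ ^ 2 := by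
        congr 1
        apply intervalIntegral.integral_congr
        intro x hx
        rw [huIcc] at hx
        show (w x).re ^ 2 + (w x).im ^ 2 = ‖iteratedDerivWithin 2 u (Set.Icc 0 l) x‖ ^ 2
        rw [hiter x hx, hnorm]
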